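/- Let $A$ be a $q \times p$ real matrix of full row rank, $\Sigma_y$ ($q \times q$) and $\Sigma_\theta$ ($p \times p$) symmetric positive definite, $\mu_y \in \mathbb R^q$, $\mu_\theta \in \mathbb R^p$. With $\tilde\Sigma := (A^\top \Sigma_y^{-1} A - A^\top(A\Sigma_\theta A^\top)^{-1}A + \Sigma_\theta^{-1})^{-1}$ and $\tilde\mu := \tilde\Sigma\big(A^\top \Sigma_y^{-1}\mu_y - A^\top(A\Sigma_\theta A^\top)^{-1}A\mu_\theta + \Sigma_\theta^{-1}\mu_\theta\big)$, we have $A\tilde\mu = \mu_y$. -/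

import Mathlib

open Matrix

/-- mean part of Lemma B.1: with
`Σ̃ = (Aᵀ Σ_y⁻¹ A - Aᵀ (A Σ_θ Aᵀ)⁻¹ A + Σ_θ⁻¹)⁻¹` and
`μ̃ = Σ̃ (Aᵀ Σ_y⁻¹ μ_y - Aᵀ (A Σ_θ Aᵀ)⁻¹ A μ_θ + Σ_θ⁻¹ μ_θ)`, we have `A μ̃ = μ_y`. -/
theorem stmt7
    (p q : ℕ)
    (A : Matrix (Fin q) (Fin p) ℝ) (hA : A.rank = q)
    (Sy : Matrix (Fin q) (Fin q) ℝ) (hSy : Sy.PosDef) (hSy_symm : Sy.IsSymm)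
    (St : Matrix (Fin p) (Fin p) ℝ) (hSt : St.PosDef) (hSt_symm : St.IsSymm)
    (muY : Fin q → ℝ) (muT : Fin p → ℝ)
    (tS : Matrix (Fin p) (Fin p) ℝ)
    (htS : tS = (Aᵀ * Sy⁻¹ * A - Aᵀ * (A * St * Aᵀ)⁻¹ * A + St⁻¹)⁻¹)
    (htS_inv : IsUnit (Aᵀ * Sy⁻¹ * A - Aᵀ * (A * St * Aᵀ)⁻¹ * A + St⁻¹).det)
    (tmu : Fin p → ℝ)
    (htmu : tmu = tS.mulVec
      (Aᵀ.mulVec (Sy⁻¹.mulVec muY) - Aᵀ.mulVec ((A * St * Aᵀ)⁻¹.mulVec (A.mulVec muT))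
        + St⁻¹.mulVec muT)) :
    A.mulVec tmu = muY := by
  -- abbreviations
  set S : Matrix (Fin q) (Fin q) ℝ := A * St * Aᵀ with hS
  set M : Matrix (Fin p) (Fin p) ℝ := Aᵀ * Sy⁻¹ * A - Aᵀ * S⁻¹ * A + St⁻¹ with hM
  -- rows of A are linearly independent, so vecMul A is injective
  have hvm : Function.Injective A.vecMul := by
    rw [Matrix.vecMul_injective_iff]
    rw [linearIndependent_iff_card_eq_finrank_span]
    rw [Set.finrank, ← Matrix.rank_eq_finrank_span_row, hA, Fintype.card_fin]
  -- S is positive definite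
  have hSpd : S.PosDef := by
    rw [Matrix.posDef_iff_dotProduct_mulVec]
    constructor
    · have h1 : Sᵀ = S := by
        rw [hS, Matrix.transpose_mul, Matrix.transpose_mul, Matrix.transpose_transpose,
          hSt_symm.eq, Matrix.mul_assoc]
      simpa [Matrix.IsHermitian] using h1
    · intro x hx
      have hy : A.vecMul x ≠ 0 := by
        intro h
        exact hx (hvm (by simpa using h))
      have hpos := hSt.dotProduct_mulVec_pos hy
      have heq : star x ⬝ᵥ S *ᵥ x = star (A.vecMul x) ⬝ᵥ St *ᵥ (A.vecMul x) := by
        simp only [hS, ← Matrix.mulVec_mulVec, Matrix.dotProduct_mulVec,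
          Matrix.mulVec_transpose, star_trivial]
      rw [heq]
      exact hpos
  have hSyu : IsUnit Sy.det := hSy.det_pos.ne'.isUnit
  have hStu : IsUnit St.det := hSt.det_pos.ne'.isUnit
  have hSu : IsUnit S.det := hSpd.det_pos.ne'.isUnit
  -- key algebraic identity : M * (St * Aᵀ * S⁻¹ * Sy) = Aᵀ
  have hkey : M * (St * Aᵀ * S⁻¹ * Sy) = Aᵀ := by
    have e1 : Aᵀ * Sy⁻¹ * A * (St * Aᵀ * S⁻¹ * Sy) = Aᵀ := by
      have h' : Aᵀ * Sy⁻¹ * A * (St * Aᵀ * S⁻¹ * Sy)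
          = Aᵀ * Sy⁻¹ * (S * S⁻¹) * Sy := by
        simp only [hS, Matrix.mul_assoc]
      rw [h', Matrix.mul_nonsing_inv _ hSu, Matrix.mul_one, Matrix.mul_assoc,
        Matrix.nonsing_inv_mul _ hSyu, Matrix.mul_one]
    have e2 : Aᵀ * S⁻¹ * A * (St * Aᵀ * S⁻¹ * Sy) = Aᵀ * S⁻¹ * Sy := by
      have h' : Aᵀ * S⁻¹ * A * (St * Aᵀ * S⁻¹ * Sy)
          = Aᵀ * S⁻¹ * (S * S⁻¹) * Sy := by
        simp only [hS, Matrix.mul_assoc]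
      rw [h', Matrix.mul_nonsing_inv _ hSu, Matrix.mul_one]
    have e3 : St⁻¹ * (St * Aᵀ * S⁻¹ * Sy) = Aᵀ * S⁻¹ * Sy := by
      have h' : St⁻¹ * (St * Aᵀ * S⁻¹ * Sy) = (St⁻¹ * St) * Aᵀ * S⁻¹ * Sy := by
        simp only [Matrix.mul_assoc]
      rw [h', Matrix.nonsing_inv_mul _ hStu, Matrix.one_mul]
    rw [hM, Matrix.add_mul, Matrix.sub_mul, e1, e2, e3]
    abel
  have htSM : tS * M = 1 := by rw [htS]; exact Matrix.nonsing_inv_mul _ htS_inv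
  -- tS * Aᵀ = St * Aᵀ * S⁻¹ * Sy
  have htSA : tS * Aᵀ = St * Aᵀ * S⁻¹ * Sy := by
    calc tS * Aᵀ = tS * (M * (St * Aᵀ * S⁻¹ * Sy)) := by rw [hkey]
    _ = (tS * M) * (St * Aᵀ * S⁻¹ * Sy) := by simp only [← Matrix.mul_assoc]
    _ = St * Aᵀ * S⁻¹ * Sy := by rw [htSM, Matrix.one_mul]
  -- A * tS * Aᵀ = Sy
  have hAtSA : A * tS * Aᵀ = Sy := by
    calc A * tS * Aᵀ = A * (tS * Aᵀ) := by rw [Matrix.mul_assoc]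
    _ = (S * S⁻¹) * Sy := by rw [htSA]; simp only [hS, Matrix.mul_assoc]
    _ = Sy := by rw [Matrix.mul_nonsing_inv _ hSu, Matrix.one_mul]
  -- A * tS * Aᵀ * Sy⁻¹ = 1
  have h1 : A * tS * Aᵀ * Sy⁻¹ = 1 := by
    rw [hAtSA, Matrix.mul_nonsing_inv _ hSyu]
  -- A * tS * St⁻¹ = A * tS * Aᵀ * S⁻¹ * A
  have h2 : A * tS * St⁻¹ = A * tS * Aᵀ * S⁻¹ * A := by
    have hMdef : St⁻¹ = M - Aᵀ * Sy⁻¹ * A + Aᵀ * S⁻¹ * A := by rw [hM]; abel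
    have hx1 : A * tS * St⁻¹
        = A * (tS * M) - A * tS * (Aᵀ * Sy⁻¹ * A) + A * tS * (Aᵀ * S⁻¹ * A) := by
      rw [hMdef, Matrix.mul_add, Matrix.mul_sub]
      simp only [Matrix.mul_assoc]
    have hx2 : A * tS * (Aᵀ * Sy⁻¹ * A) = A := by
      have h' : A * tS * (Aᵀ * Sy⁻¹ * A) = (A * tS * Aᵀ * Sy⁻¹) * A := by
        simp only [Matrix.mul_assoc]
      rw [h', h1, Matrix.one_mul]
    rw [hx1, htSM, Matrix.mul_one, hx2]
    have h' : A * tS * (Aᵀ * S⁻¹ * A) = A * tS * Aᵀ * S⁻¹ * A := by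
      simp only [Matrix.mul_assoc]
    rw [h']
    abel
  -- now the vector computation
  rw [htmu, Matrix.mulVec_mulVec]
  rw [Matrix.mulVec_add, Matrix.mulVec_sub]
  have t1 : (A * tS).mulVec (Aᵀ.mulVec (Sy⁻¹.mulVec muY)) = muY := by
    simp only [Matrix.mulVec_mulVec, ← Matrix.mul_assoc, h1, Matrix.one_mulVec]
  have t2 : (A * tS).mulVec (Aᵀ.mulVec (S⁻¹.mulVec (A.mulVec muT)))
      = (A * tS).mulVec (St⁻¹.mulVec muT) := by
    simp only [Matrix.mulVec_mulVec, ← Matrix.mul_assoc, h2]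
  rw [t1, t2]
  abel
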